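/- Let g be an alternating L-convex function on T^n, let x ∈ dom g satisfy g(x) = min_{y ∈ F(x)} g(y), and let x = x^0, x^1, x^2, … be a sequence generated by the steepest descent algorithm applied to (g,x), i.e., each x^{i+1} is a minimizer of g over I(x^i) ∪ F(x^i) and g(x^{i+1}) < g(x^i). Then for every k ≥ 1 and every z ∈ I(x^k) ∪ F(x^k) with g(z) < g(x^k), it holds d(x,z) = k+1. -/

import Mathlib

open SimpleGraph

/-- A tree `T` regarded as a bipartite graph with black class `B` and white class `W`,
together with the discrete midpoint operations `bull` (`•`) and `circ` (`∘`) characterized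
by: `{u • v, u ∘ v} = {a, b}` where `(a,b)` is the unique pair with
`d(u,v) = d(u,a) + d(a,b) + d(b,v)`, `d(u,a) = d(b,v)`, `d(a,b) ≤ 1`, and `u ∘ v ⪯ u • v`. -/
structure AltTree (V : Type*) where
  T : SimpleGraph V
  tree : T.IsTree
  B : Set V
  W : Set V
  color_disjoint : Disjoint B W
  color_cover : B ∪ W = Set.univ
  adj_colors : ∀ ⦃u v : V⦄, T.Adj u v → (u ∈ B ∧ v ∈ W) ∨ (u ∈ W ∧ v ∈ B)
  bull : V → V → V
  circ : V → V → V
  mid_spec : ∀ u v : V,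
      (T.dist u v = T.dist u (bull u v) + T.dist (bull u v) (circ u v) + T.dist (circ u v) v
        ∧ T.dist u (bull u v) = T.dist (circ u v) v)
    ∨ (T.dist u v = T.dist u (circ u v) + T.dist (circ u v) (bull u v) + T.dist (bull u v) v
        ∧ T.dist u (circ u v) = T.dist (bull u v) v)
  mid_close : ∀ u v : V, T.dist (bull u v) (circ u v) ≤ 1
  circ_le_bull : ∀ u v : V, circ u v = bull u v ∨
      (T.Adj (circ u v) (bull u v) ∧ circ u v ∈ W ∧ bull u v ∈ B)

namespace AltTree

variable {V : Type*} {n : ℕ}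

/-- The alternating partial order `u ⪯ v` on the vertices of `T`:
`u ⪯ v` iff `u = v` or `u` and `v` are adjacent with `u` white and `v` black. -/
def le (A : AltTree V) (u v : V) : Prop :=
  u = v ∨ (A.T.Adj u v ∧ u ∈ A.W ∧ v ∈ A.B)

/-- The componentwise partial order on `T^n`.  `A.leP y x` means `y ∈ I(x)`,
and `A.leP x y` means `y ∈ F(x)`. -/
def leP (A : AltTree V) (x y : Fin n → V) : Prop := ∀ i, A.le (x i) (y i)

/-- The `l∞`-metric on `T^n`. -/
noncomputable def distP (A : AltTree V) (x y : Fin n → V) : ℕ :=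
  Finset.univ.sup fun i => A.T.dist (x i) (y i)

/-- Componentwise `•` on `T^n`. -/
def bullP (A : AltTree V) (x y : Fin n → V) : Fin n → V := fun i => A.bull (x i) (y i)

/-- Componentwise `∘` on `T^n`. -/
def circP (A : AltTree V) (x y : Fin n → V) : Fin n → V := fun i => A.circ (x i) (y i)

/-- Alternating L-convexity: `g(x) + g(y) ≥ g(x • y) + g(x ∘ y)` for all `x, y ∈ T^n`. -/
def IsLConvex (A : AltTree V) (g : (Fin n → V) → WithTop ℝ) : Prop :=
  ∀ x y : Fin n → V, g (A.bullP x y) + g (A.circP x y) ≤ g x + g y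

end AltTree

namespace AltTree

variable {V : Type*} (A : AltTree V)

lemma connected : A.T.Connected := A.tree.isConnected

lemma dist0 {u v : V} (h : A.T.dist u v = 0) : u = v :=
  (A.connected.dist_eq_zero_iff).mp h

lemma adj_dist {u v : V} (h : A.T.Adj u v) : A.T.dist u v = 1 :=
  dist_eq_one_iff_adj.mpr h

lemma mem_W_iff {u : V} : u ∈ A.W ↔ u ∉ A.B := by
  constructor
  · intro hW hB
    exact Set.disjoint_left.mp A.color_disjoint hB hW
  · intro hB
    have h2 : u ∈ A.B ∪ A.W := by rw [A.color_cover]; trivial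
    rcases h2 with h2 | h2
    · exact absurd h2 hB
    · exact h2

lemma adj_opp {u v : V} (h : A.T.Adj u v) : (u ∈ A.B ↔ v ∉ A.B) := by
  rcases A.adj_colors h with ⟨h1, h2⟩ | ⟨h1, h2⟩
  · rw [A.mem_W_iff] at h2; tauto
  · rw [A.mem_W_iff] at h1; tauto

lemma walk_parity {u v : V} (w : A.T.Walk u v) :
    Even w.length ↔ (u ∈ A.B ↔ v ∈ A.B) := by
  induction w with
  | nil => simp
  | cons h q ih =>
    have hop := A.adj_opp h
    rw [Walk.length_cons]
    rw [Nat.even_add_one, ih]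
    tauto

/-- T1: distances from a fixed vertex to two adjacent vertices differ by exactly one. -/
lemma dist_pm (p : V) {s s' : V} (h : A.T.Adj s s') :
    A.T.dist p s' = A.T.dist p s + 1 ∨ A.T.dist p s = A.T.dist p s' + 1 := by
  have hne : A.T.dist p s ≠ A.T.dist p s' := by
    intro heq
    obtain ⟨w1, _, l1⟩ := A.connected.exists_path_of_dist p s
    obtain ⟨w2, _, l2⟩ := A.connected.exists_path_of_dist p s'
    have p1 := A.walk_parity w1
    have p2 := A.walk_parity w2
    have hlen : w1.length = w2.length := by omega
    have hop := A.adj_opp h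
    rw [hlen] at p1
    tauto
  have hd : A.T.dist s s' = 1 := A.adj_dist h
  have hd' : A.T.dist s' s = 1 := by rw [SimpleGraph.dist_comm]; exact hd
  have t1 := A.connected.dist_triangle (u := p) (v := s) (w := s')
  have t2 := A.connected.dist_triangle (u := p) (v := s') (w := s)
  omega

/-- T2: in a tree, a vertex cannot have two distinct neighbors both strictly
closer to `p`. -/
lemma no_local_max {p s a b : V} (h1 : A.T.Adj s a) (h2 : A.T.Adj s b) (hab : a ≠ b)
    (da : A.T.dist p a + 1 = A.T.dist p s) (db : A.T.dist p b + 1 = A.T.dist p s) :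
    False := by
  classical
  obtain ⟨wa, hwa, la⟩ := A.connected.exists_path_of_dist a p
  obtain ⟨wb, hwb, lb⟩ := A.connected.exists_path_of_dist b p
  have hca : A.T.dist a p = A.T.dist p a := SimpleGraph.dist_comm
  have hcb : A.T.dist b p = A.T.dist p b := SimpleGraph.dist_comm
  have hcs : A.T.dist s p = A.T.dist p s := SimpleGraph.dist_comm
  have hsa : s ∉ wa.support := by
    intro hmem
    have hsplit := congrArg Walk.length (wa.take_spec hmem)
    rw [Walk.length_append] at hsplit
    have hd1 := SimpleGraph.dist_le (wa.dropUntil s hmem)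
    omega
  have hsb : s ∉ wb.support := by
    intro hmem
    have hsplit := congrArg Walk.length (wb.take_spec hmem)
    rw [Walk.length_append] at hsplit
    have hd1 := SimpleGraph.dist_le (wb.dropUntil s hmem)
    omega
  have hP1 : (Walk.cons h1 wa).IsPath := hwa.cons hsa
  have hP2 : (Walk.cons h2 wb).IsPath := hwb.cons hsb
  have huniq := A.tree.existsUnique_path s p
  have heq : Walk.cons h1 wa = Walk.cons h2 wb :=
    (huniq.unique hP1 hP2)
  have hsup := congrArg Walk.support heq
  rw [Walk.support_cons, Walk.support_cons, wa.support_eq_cons, wb.support_eq_cons] at hsup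
  simp only [List.cons.injEq] at hsup
  exact hab hsup.2.1

/-- T3: a strictly closer neighbor towards `s`. -/
lemma exists_adj_closer {u s : V} (h : u ≠ s) :
    ∃ u', A.T.Adj u u' ∧ A.T.dist u' s + 1 = A.T.dist u s := by
  obtain ⟨w, _, hl⟩ := A.connected.exists_path_of_dist u s
  cases w with
  | nil =>
    exact absurd (A.dist0 hl.symm) h
  | @cons _ u' _ hadj q =>
    refine ⟨u', hadj, ?_⟩
    have h1 := SimpleGraph.dist_le q
    have h2 := A.connected.dist_triangle (u := u) (v := u') (w := s)
    have h3 : A.T.dist u u' = 1 := A.adj_dist hadj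
    rw [Walk.length_cons] at hl
    omega

/-- The gate property: if `s` lies (metrically) between `u` and `v` in the tree, then
the distance from any `p` decomposes along one of the two sides. -/
lemma between (p : V) : ∀ (D : ℕ) (u v s : V), A.T.dist u v = D →
    A.T.dist u s + A.T.dist s v = A.T.dist u v →
    A.T.dist p u = A.T.dist p s + A.T.dist s u ∨
    A.T.dist p v = A.T.dist p s + A.T.dist s v := by
  intro D
  induction D using Nat.strong_induction_on with
  | _ D IH =>
  intro u v s hD hbtw
  by_cases hus : u = s
  · subst hus
    left
    simp [SimpleGraph.dist_self]
  by_cases hsv : s = v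
  · subst hsv
    right
    simp [SimpleGraph.dist_self]
  have h1 : A.T.dist u s ≠ 0 := fun h => hus (A.dist0 h)
  have h2 : A.T.dist s v ≠ 0 := fun h => hsv (A.dist0 h)
  obtain ⟨u', hadj_u, hu'⟩ := A.exists_adj_closer hus
  have cuu' : A.T.dist u u' = 1 := A.adj_dist hadj_u
  have tr1 := A.connected.dist_triangle (u := u') (v := s) (w := v)
  have tr2 := A.connected.dist_triangle (u := u) (v := u') (w := v)
  have hDu' : A.T.dist u' v + 1 = D := by omega
  have hbtw' : A.T.dist u' s + A.T.dist s v = A.T.dist u' v := by omega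
  have hcomm_su' : A.T.dist s u' = A.T.dist u' s := SimpleGraph.dist_comm
  have hcomm_su : A.T.dist s u = A.T.dist u s := SimpleGraph.dist_comm
  have hcomm_sv : A.T.dist s v = A.T.dist v s := SimpleGraph.dist_comm
  rcases IH (A.T.dist u' v) (by omega) u' v s rfl hbtw' with hA | hB
  swap
  · right; exact hB
  -- hA : d p u' = d p s + d s u'
  rcases A.dist_pm p hadj_u with hbad | hgood
  swap
  · -- hgood : d p u = d p u' + 1
    left; omega
  -- hbad : d p u' = d p u + 1
  by_cases hu's : u' = s
  · -- u adjacent to s, d p s = d p u + 1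
    have hsub : s = u' := hu's.symm
    subst hsub
    obtain ⟨v', hadj_v, hv'⟩ := A.exists_adj_closer (show v ≠ s from fun h => hsv h.symm)
    have cvv' : A.T.dist v v' = 1 := A.adj_dist hadj_v
    have tr3 := A.connected.dist_triangle (u := u) (v := s) (w := v')
    have tr4 := A.connected.dist_triangle (u := u) (v := v') (w := v)
    have tr5 := A.connected.dist_triangle (u := u) (v := v) (w := v')
    have hcomm_sv' : A.T.dist s v' = A.T.dist v' s := SimpleGraph.dist_comm
    have hcomm_v'v : A.T.dist v' v = A.T.dist v v' := SimpleGraph.dist_comm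
    have hDv' : A.T.dist u v' + 1 = D := by omega
    have hbtw'' : A.T.dist u s + A.T.dist s v' = A.T.dist u v' := by omega
    rcases IH (A.T.dist u v') (by omega) u v' s rfl hbtw'' with hC | hD2
    · -- hC : d p u = d p s + d s u, contradicting hbad
      exfalso; omega
    -- hD2 : d p v' = d p s + d s v'
    rcases A.dist_pm p hadj_v with hbad2 | hgood2
    swap
    · -- d p v = d p v' + 1
      right; omega
    -- hbad2 : d p v' = d p v + 1
    by_cases hv's : v' = s
    · have hsub2 : s = v' := hv's.symm
      subst hsub2
      exfalso
      have hds : A.T.dist u u = 0 := SimpleGraph.dist_self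
      have hds2 : A.T.dist s s = 0 := SimpleGraph.dist_self
      refine A.no_local_max (p := p) hadj_u.symm hadj_v.symm ?_ (by omega) (by omega)
      intro huv
      subst huv
      omega
    · exfalso
      obtain ⟨v'', hadj_v'', hv''⟩ := A.exists_adj_closer hv's
      have tr6 := A.connected.dist_triangle (u := p) (v := s) (w := v'')
      have hcomm_sv'' : A.T.dist s v'' = A.T.dist v'' s := SimpleGraph.dist_comm
      have hds2 : A.T.dist s s = 0 := SimpleGraph.dist_self
      rcases A.dist_pm p hadj_v'' with hx | hx
      · -- d p v'' = d p v' + 1; contradiction with triangle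
        omega
      · -- d p v' = d p v'' + 1
        refine A.no_local_max (p := p) hadj_v.symm hadj_v'' ?_ (by omega) (by omega)
        intro hvv''
        rw [← hvv''] at hv''
        omega
  · exfalso
    obtain ⟨u'', hadj_u'', hu''⟩ := A.exists_adj_closer hu's
    have tr6 := A.connected.dist_triangle (u := p) (v := s) (w := u'')
    have hcomm_su'' : A.T.dist s u'' = A.T.dist u'' s := SimpleGraph.dist_comm
    have trp1 := A.connected.dist_triangle (u := p) (v := s) (w := u')
    rcases A.dist_pm p hadj_u'' with hx | hx
    · omega
    · refine A.no_local_max (p := p) hadj_u.symm hadj_u'' ?_ (by omega) (by omega)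
      intro huu''
      rw [← huu''] at hu''
      omega

/-- Metric facts about the midpoint pair. -/
lemma mid_dists (u v : V) :
    A.T.dist u (A.bull u v) + A.T.dist (A.bull u v) v = A.T.dist u v ∧
    A.T.dist u (A.circ u v) + A.T.dist (A.circ u v) v = A.T.dist u v ∧
    A.T.dist u (A.bull u v) + A.T.dist u (A.circ u v) = A.T.dist u v ∧
    (A.T.dist u (A.bull u v) = A.T.dist u (A.circ u v) + A.T.dist (A.bull u v) (A.circ u v) ∨
     A.T.dist u (A.circ u v) = A.T.dist u (A.bull u v) + A.T.dist (A.bull u v) (A.circ u v)) := by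
  have tB1 := A.connected.dist_triangle (u := u) (v := A.bull u v) (w := v)
  have tB2 := A.connected.dist_triangle (u := A.bull u v) (v := A.circ u v) (w := v)
  have tC1 := A.connected.dist_triangle (u := u) (v := A.circ u v) (w := v)
  have tC2 := A.connected.dist_triangle (u := u) (v := A.bull u v) (w := A.circ u v)
  have tB2' := A.connected.dist_triangle (u := A.circ u v) (v := A.bull u v) (w := v)
  have tC2' := A.connected.dist_triangle (u := u) (v := A.circ u v) (w := A.bull u v)
  have hcm : A.T.dist (A.circ u v) (A.bull u v) = A.T.dist (A.bull u v) (A.circ u v) :=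
    SimpleGraph.dist_comm
  rcases A.mid_spec u v with ⟨h1, h2⟩ | ⟨h1, h2⟩
  · exact ⟨by omega, by omega, by omega, Or.inr (by omega)⟩
  · exact ⟨by omega, by omega, by omega, Or.inl (by omega)⟩

lemma bull_self (u : V) : A.bull u u = u := by
  have h := (A.mid_dists u u).1
  rw [SimpleGraph.dist_self] at h
  exact (A.dist0 (by omega)).symm

lemma circ_self (u : V) : A.circ u u = u := by
  have h := (A.mid_dists u u).2.1
  rw [SimpleGraph.dist_self] at h
  exact (A.dist0 (by omega)).symm

lemma mid_adj {u v : V} (h : A.T.Adj u v) :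
    (A.bull u v = u ∧ A.circ u v = v ∧ u ∈ A.B ∧ v ∈ A.W) ∨
    (A.bull u v = v ∧ A.circ u v = u ∧ u ∈ A.W ∧ v ∈ A.B) := by
  obtain ⟨hB, hC, hS, _⟩ := A.mid_dists u v
  have hD : A.T.dist u v = 1 := A.adj_dist h
  have hne : u ≠ v := h.ne
  rcases Nat.le_one_iff_eq_zero_or_eq_one.mp
      (show A.T.dist u (A.bull u v) ≤ 1 by omega) with h0 | h1
  · -- bull = u, circ = v
    have hbu : A.bull u v = u := (A.dist0 h0).symm
    have hcv : A.circ u v = v :=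
      A.dist0 (show A.T.dist (A.circ u v) v = 0 by omega)
    rcases A.circ_le_bull u v with heq | ⟨_, hcW, hbB⟩
    · rw [hbu, hcv] at heq; exact absurd heq.symm hne
    · rw [hbu] at hbB; rw [hcv] at hcW
      exact Or.inl ⟨hbu, hcv, hbB, hcW⟩
  · -- bull = v, circ = u
    have hcu : A.circ u v = u :=
      (A.dist0 (show A.T.dist u (A.circ u v) = 0 by omega)).symm
    have hbv : A.bull u v = v := A.dist0 (by omega)
    rcases A.circ_le_bull u v with heq | ⟨_, hcW, hbB⟩
    · rw [hbv, hcu] at heq; exact absurd heq hne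
    · rw [hbv] at hbB; rw [hcu] at hcW
      exact Or.inr ⟨hbv, hcu, hcW, hbB⟩

lemma bull_eq_of_black {u v : V} (h : A.T.Adj u v) (hu : u ∈ A.B) : A.bull u v = u := by
  rcases A.mid_adj h with ⟨h1, _, _, _⟩ | ⟨_, _, huW, _⟩
  · exact h1
  · exact absurd hu ((A.mem_W_iff).mp huW)

lemma circ_eq_of_white {u v : V} (h : A.T.Adj u v) (hu : u ∈ A.W) : A.circ u v = u := by
  rcases A.mid_adj h with ⟨_, _, huB, _⟩ | ⟨_, h2, _, _⟩
  · exact absurd huB ((A.mem_W_iff).mp hu)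
  · exact h2

lemma mid_le {u v : V} (h : A.T.dist u v ≤ 1) :
    A.le (A.circ u v) u ∧ A.le u (A.bull u v) := by
  rcases Nat.le_one_iff_eq_zero_or_eq_one.mp h with h0 | h1
  · have := A.dist0 h0
    subst this
    rw [A.bull_self, A.circ_self]
    exact ⟨Or.inl rfl, Or.inl rfl⟩
  · have hadj : A.T.Adj u v := dist_eq_one_iff_adj.mp h1
    rcases A.mid_adj hadj with ⟨hb, hc, huB, hvW⟩ | ⟨hb, hc, huW, hvB⟩
    · constructor
      · rw [hc]; exact Or.inr ⟨hadj.symm, hvW, huB⟩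
      · rw [hb]; exact Or.inl rfl
    · constructor
      · rw [hc]; exact Or.inl rfl
      · rw [hb]; exact Or.inr ⟨hadj, huW, hvB⟩


lemma mid_range (q r : V) (h2 : 2 ≤ A.T.dist q r) :
    (1 ≤ A.T.dist q (A.bull q r) ∧ A.T.dist q (A.bull q r) ≤ A.T.dist q r - 1) ∧
    (1 ≤ A.T.dist q (A.circ q r) ∧ A.T.dist q (A.circ q r) ≤ A.T.dist q r - 1) := by
  obtain ⟨b1, b2, b3, b4⟩ := A.mid_dists q r
  have he := A.mid_close q r
  rcases b4 with h | h <;> constructor <;> constructor <;> omega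

lemma coord_step {q r : V} {m : ℕ} (hD : A.T.dist q r ≤ m) (h2 : 2 ≤ m) :
    A.T.dist q (A.bull q r) ≤ m - 1 ∧ A.T.dist q (A.circ q r) ≤ m - 1 := by
  obtain ⟨b1, b2, b3, b4⟩ := A.mid_dists q r
  have he := A.mid_close q r
  rcases b4 with h | h <;> constructor <;> omega

lemma coord_far {p q r : V} {c : ℕ} (hq : A.T.dist p q ≤ c) (hr : A.T.dist p r ≤ c + 1) :
    A.T.dist p (A.bull q r) ≤ c + 1 ∧ A.T.dist p (A.circ q r) ≤ c + 1 := by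
  obtain ⟨b1, b2, _, _⟩ := A.mid_dists q r
  have g1 := A.between p (A.T.dist q r) q r (A.bull q r) rfl b1
  have g2 := A.between p (A.T.dist q r) q r (A.circ q r) rfl b2
  constructor
  · rcases g1 with h | h <;> omega
  · rcases g2 with h | h <;> omega

lemma coord_near {p q r s : V} {c : ℕ} (hq : A.T.dist p q ≤ c) (hr : A.T.dist p r ≤ c + 1)
    (hbtw : A.T.dist q s + A.T.dist s r = A.T.dist q r)
    (hmid : 2 ≤ A.T.dist q r → 1 ≤ A.T.dist q s ∧ A.T.dist q s ≤ A.T.dist q r - 1)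
    (hexc : A.T.dist q r = 1 → A.T.dist p r = c + 1 → s = q) :
    A.T.dist p s ≤ c := by
  have hg := A.between p (A.T.dist q r) q r s rfl hbtw
  by_cases hD2 : 2 ≤ A.T.dist q r
  · have := hmid hD2
    rcases hg with h | h <;> omega
  · by_cases hD0 : A.T.dist q r = 0
    · have hqs : q = s := A.dist0 (by omega)
      rw [← hqs]; exact hq
    · have hD1 : A.T.dist q r = 1 := by omega
      by_cases hpr : A.T.dist p r = c + 1
      · rw [hexc hD1 hpr]; exact hq
      · by_cases ht : A.T.dist q s = 0
        · rw [← A.dist0 ht]; exact hq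
        · have hsr : s = r := A.dist0 (by omega)
          rw [hsr]; omega

lemma wcancel {a b c e : WithTop ℝ} (h : a + b ≤ c + e) (hca : c ≤ a) (hc : c ≠ ⊤) :
    b ≤ e := by
  rcases eq_or_ne e ⊤ with rfl | he
  · exact le_top
  have hce : c + e ≠ ⊤ := WithTop.add_ne_top.mpr ⟨hc, he⟩
  have hab : a + b ≠ ⊤ := fun h' => hce (top_le_iff.mp (h' ▸ h))
  have ha : a ≠ ⊤ := (WithTop.add_ne_top.mp hab).1
  have h2 : a + b ≤ a + e := le_trans h (add_le_add hca le_rfl)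
  exact (WithTop.add_le_add_iff_left ha).mp h2


end AltTree

/-- Lemma 2.19.  Let `g` be alternating L-convex on `T^n`, let
`x ∈ dom g` satisfy `g(x) = min_{y ∈ F(x)} g(y)`, and let `x = x^0, x^1, x^2, …` be
(an initial segment of length `K` of) a run of the steepest descent algorithm applied
to `(g, x)`: each `x^{i+1}` is a minimizer of `g` over `I(x^i) ∪ F(x^i)` and
`g(x^{i+1}) < g(x^i)`.  Then for every `k` with `1 ≤ k ≤ K` and every
`z ∈ I(x^k) ∪ F(x^k)` with `g(z) < g(x^k)`, it holds `d(x, z) = k + 1`. -/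
theorem stmt14 {V : Type*} (A : AltTree V) {n : ℕ}
    (g : (Fin n → V) → WithTop ℝ) (hg : A.IsLConvex g)
    (x : Fin n → V) (hdom : g x ≠ ⊤)
    (hloc : ∀ z : Fin n → V, A.leP x z → g x ≤ g z)
    (seq : ℕ → Fin n → V) (h0 : seq 0 = x) (K : ℕ)
    (hstep : ∀ i < K, (A.leP (seq (i + 1)) (seq i) ∨ A.leP (seq i) (seq (i + 1))) ∧
      (∀ z : Fin n → V, (A.leP z (seq i) ∨ A.leP (seq i) z) → g (seq (i + 1)) ≤ g z) ∧
      g (seq (i + 1)) < g (seq i)) :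
    ∀ k, 1 ≤ k → k ≤ K →
      ∀ z : Fin n → V, (A.leP z (seq k) ∨ A.leP (seq k) z) → g z < g (seq k) →
        A.distP x z = k + 1 := by
  classical
  have conn := A.connected
  have coordLe : ∀ (a b : Fin n → V) (i : Fin n), A.T.dist (a i) (b i) ≤ A.distP a b := by
    intro a b i
    simp only [AltTree.distP]
    exact Finset.le_sup (f := fun i => A.T.dist (a i) (b i)) (Finset.mem_univ i)
  have distPle : ∀ (a b : Fin n → V) (c : ℕ), (∀ i, A.T.dist (a i) (b i) ≤ c) →
      A.distP a b ≤ c := by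
    intro a b c h
    simp only [AltTree.distP]
    exact Finset.sup_le fun i _ => h i
  have distTri : ∀ a b c : Fin n → V, A.distP a c ≤ A.distP a b + A.distP b c := by
    intro a b c
    refine distPle _ _ _ fun i => ?_
    exact le_trans (conn.dist_triangle (u := a i) (v := b i) (w := c i))
      (Nat.add_le_add (coordLe a b i) (coordLe b c i))
  have lePdist : ∀ a b : Fin n → V, A.leP a b → A.distP a b ≤ 1 := by
    intro a b h
    refine distPle _ _ _ fun i => ?_
    rcases h i with he | ⟨hadj, _, _⟩
    · rw [he]
      have : A.T.dist (b i) (b i) = 0 := SimpleGraph.dist_self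
      omega
    · exact le_of_eq (A.adj_dist hadj)
  have distComm : ∀ a b : Fin n → V, A.distP a b = A.distP b a := by
    intro a b
    simp only [AltTree.distP]
    congr 1
    funext i
    exact SimpleGraph.dist_comm
  have lePtrans : ∀ a b c : Fin n → V, A.leP a b → A.leP b c → A.leP a c := by
    intro a b c h1 h2 i
    rcases h1 i with he | ⟨hadj1, hW1, hB1⟩
    · rw [he]; exact h2 i
    rcases h2 i with he2 | ⟨hadj2, hW2, hB2⟩
    · rw [← he2]; exact Or.inr ⟨hadj1, hW1, hB1⟩
    · exact absurd hB1 (A.mem_W_iff.mp hW2)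
  have gtop : ∀ k, k ≤ K → g (seq k) ≠ ⊤ := by
    intro k
    induction k with
    | zero => intro _; rw [h0]; exact hdom
    | succ k _ =>
      intro hk
      have h1 := (hstep k (by omega)).2.2
      intro htop
      rw [htop] at h1
      exact absurd h1 not_top_lt
  have minDir : ∀ k, k ≤ K →
      ((Even k → ∀ z, A.leP (seq k) z → g (seq k) ≤ g z) ∧
       (¬Even k → ∀ z, A.leP z (seq k) → g (seq k) ≤ g z)) := by
    intro k
    induction k with
    | zero =>
      intro _
      refine ⟨fun _ z hz => ?_, fun h => absurd Even.zero h⟩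
      rw [h0] at hz ⊢
      exact hloc z hz
    | succ k IH =>
      intro hk1
      have hkK : k ≤ K := by omega
      have IH' := IH hkK
      have hs := hstep k (by omega)
      have hdirE : Even k → A.leP (seq (k+1)) (seq k) := by
        intro hev
        rcases hs.1 with h | h
        · exact h
        · exact absurd hs.2.2 (not_lt.mpr (IH'.1 hev _ h))
      have hdirO : ¬Even k → A.leP (seq k) (seq (k+1)) := by
        intro hodd
        rcases hs.1 with h | h
        · exact absurd hs.2.2 (not_lt.mpr (IH'.2 hodd _ h))
        · exact h
      constructor
      · intro hev1 z hz
        have hodd : ¬Even k := Nat.even_add_one.mp hev1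
        exact hs.2.1 z (Or.inr (lePtrans _ _ _ (hdirO hodd) hz))
      · intro hodd1 z hz
        have hev : Even k := by
          by_contra h
          exact hodd1 (Nat.even_add_one.mpr h)
        exact hs.2.1 z (Or.inl (lePtrans _ _ _ hz (hdirE hev)))
  have dirP : ∀ k, k < K →
      ((Even k → A.leP (seq (k+1)) (seq k)) ∧
       (¬Even k → A.leP (seq k) (seq (k+1)))) := by
    intro k hk
    have IH' := minDir k (le_of_lt hk)
    have hs := hstep k hk
    constructor
    · intro hev
      rcases hs.1 with h | h
      · exact h
      · exact absurd hs.2.2 (not_lt.mpr (IH'.1 hev _ h))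
    · intro hodd
      rcases hs.1 with h | h
      · exact absurd hs.2.2 (not_lt.mpr (IH'.2 hodd _ h))
      · exact h
  have hdistSeq : ∀ k, k ≤ K → A.distP x (seq k) ≤ k := by
    intro k
    induction k with
    | zero =>
      intro _
      rw [h0]
      exact distPle _ _ _ fun i => le_of_eq SimpleGraph.dist_self
    | succ k IH =>
      intro hk
      have h1 : A.distP (seq k) (seq (k+1)) ≤ 1 := by
        by_cases hev : Even k
        · have hd := (dirP k (by omega)).1 hev
          rw [distComm]
          exact lePdist _ _ hd
        · exact lePdist _ _ ((dirP k (by omega)).2 hev)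
      have h2 := distTri x (seq k) (seq (k+1))
      have h3 := IH (by omega)
      omega
  have hmoved : ∀ k, 1 ≤ k → k ≤ K → ∀ i, A.T.dist (x i) (seq k i) = k →
      ((Even k → seq k i ∈ A.B) ∧ (¬Even k → seq k i ∈ A.W)) := by
    intro k hk1 hkK i hdist
    obtain ⟨j, rfl⟩ : ∃ j, k = j + 1 := ⟨k - 1, by omega⟩
    have hne : seq j i ≠ seq (j+1) i := by
      intro he
      have h1 := le_trans (coordLe x (seq j) i) (hdistSeq j (by omega))
      rw [he] at h1
      omega
    constructor
    · intro hev
      have hodd : ¬Even j := Nat.even_add_one.mp hev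
      have hd := (dirP j (by omega)).2 hodd
      rcases hd i with he | ⟨_, _, hB⟩
      · exact absurd he hne
      · exact hB
    · intro hodd1
      have hev : Even j := by
        by_contra h
        exact hodd1 (Nat.even_add_one.mpr h)
      have hd := (dirP j (by omega)).1 hev
      rcases hd i with he | ⟨_, hW, _⟩
      · exact absurd he.symm hne
      · exact hW
  have hball : ∀ k, k ≤ K → ∀ y, A.distP x y ≤ k → g (seq k) ≤ g y := by
    intro k
    induction k with
    | zero =>
      intro _ y hy
      have hxy : y = x := by
        funext i
        exact (A.dist0 (Nat.le_zero.mp (le_trans (coordLe x y i) hy))).symm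
      rw [hxy, h0]
    | succ k IH =>
      intro hk1 y0 hy0
      have hkK : k ≤ K := by omega
      have IHb := IH hkK
      have hs := hstep k (by omega)
      have S : ∀ m, ∀ y, A.distP (seq k) y ≤ m → A.distP x y ≤ k + 1 →
          g (seq (k+1)) ≤ g y := by
        intro m
        induction m using Nat.strong_induction_on with
        | _ m IHm =>
        intro y hm hy
        by_cases hc : A.distP (seq k) y ≤ 1
        · have hFI : A.leP (A.circP (seq k) y) (seq k) ∧
              A.leP (seq k) (A.bullP (seq k) y) := by
            constructor <;> intro i
            · exact (A.mid_le (le_trans (coordLe (seq k) y i) hc)).1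
            · exact (A.mid_le (le_trans (coordLe (seq k) y i) hc)).2
          have hconv := hg (seq k) y
          by_cases hev : Even k
          · have h1 : g (seq k) ≤ g (A.bullP (seq k) y) := (minDir k hkK).1 hev _ hFI.2
            have h2 : g (A.circP (seq k) y) ≤ g y := AltTree.wcancel hconv h1 (gtop k hkK)
            exact le_trans (hs.2.1 _ (Or.inl hFI.1)) h2
          · have h1 : g (seq k) ≤ g (A.circP (seq k) y) := (minDir k hkK).2 hev _ hFI.1
            have hconv' : g (A.circP (seq k) y) + g (A.bullP (seq k) y) ≤
                g (seq k) + g y := by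
              rw [add_comm (g (A.circP (seq k) y))]
              exact hconv
            have h2 : g (A.bullP (seq k) y) ≤ g y := AltTree.wcancel hconv' h1 (gtop k hkK)
            exact le_trans (hs.2.1 _ (Or.inr hFI.2)) h2
        · have h2m : 2 ≤ A.distP (seq k) y := by omega
          have hm'm : A.distP (seq k) y ≤ m := hm
          have hk1' : 1 ≤ k := by
            by_contra hh
            have hk0 : k = 0 := by omega
            have hy' := hy
            rw [hk0] at hy'
            rw [hk0, h0] at h2m
            omega
          have hq : ∀ i, A.T.dist (x i) (seq k i) ≤ k :=
            fun i => le_trans (coordLe _ _ i) (hdistSeq k hkK)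
          have hr : ∀ i, A.T.dist (x i) (y i) ≤ k + 1 :=
            fun i => le_trans (coordLe _ _ i) hy
          have hDc : ∀ i, A.T.dist (seq k i) (y i) ≤ A.distP (seq k) y :=
            fun i => coordLe _ _ i
          have hstepc : ∀ i,
              A.T.dist (seq k i) (A.bull (seq k i) (y i)) ≤ A.distP (seq k) y - 1 ∧
              A.T.dist (seq k i) (A.circ (seq k i) (y i)) ≤ A.distP (seq k) y - 1 :=
            fun i => A.coord_step (hDc i) h2m
          have hfar : ∀ i, A.T.dist (x i) (A.bull (seq k i) (y i)) ≤ k + 1 ∧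
              A.T.dist (x i) (A.circ (seq k i) (y i)) ≤ k + 1 :=
            fun i => A.coord_far (hq i) (hr i)
          by_cases hev : Even k
          · have hnear : A.distP x (A.bullP (seq k) y) ≤ k := by
              refine distPle _ _ _ fun i => ?_
              refine A.coord_near (hq i) (hr i) (A.mid_dists (seq k i) (y i)).1
                (fun h2' => (A.mid_range _ _ h2').1) ?_
              intro hd1 hpr
              have htr := conn.dist_triangle (u := x i) (v := seq k i) (w := y i)
              have hα : A.T.dist (x i) (seq k i) = k := by
                have := hq i
                omega
              exact A.bull_eq_of_black (dist_eq_one_iff_adj.mp hd1)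
                ((hmoved k hk1' hkK i hα).1 hev)
            have h1 : g (seq k) ≤ g (A.bullP (seq k) y) := IHb _ hnear
            have h2 : g (A.circP (seq k) y) ≤ g y :=
              AltTree.wcancel (hg (seq k) y) h1 (gtop k hkK)
            have hrec : g (seq (k+1)) ≤ g (A.circP (seq k) y) := by
              refine IHm (A.distP (seq k) y - 1) (by omega) _ ?_ ?_
              · exact distPle _ _ _ fun i => (hstepc i).2
              · exact distPle _ _ _ fun i => (hfar i).2
            exact le_trans hrec h2
          · have hnear : A.distP x (A.circP (seq k) y) ≤ k := by
              refine distPle _ _ _ fun i => ?_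
              refine A.coord_near (hq i) (hr i) (A.mid_dists (seq k i) (y i)).2.1
                (fun h2' => (A.mid_range _ _ h2').2) ?_
              intro hd1 hpr
              have htr := conn.dist_triangle (u := x i) (v := seq k i) (w := y i)
              have hα : A.T.dist (x i) (seq k i) = k := by
                have := hq i
                omega
              exact A.circ_eq_of_white (dist_eq_one_iff_adj.mp hd1)
                ((hmoved k hk1' hkK i hα).2 hev)
            have h1 : g (seq k) ≤ g (A.circP (seq k) y) := IHb _ hnear
            have hconv' : g (A.circP (seq k) y) + g (A.bullP (seq k) y) ≤
                g (seq k) + g y := by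
              rw [add_comm (g (A.circP (seq k) y))]
              exact hg (seq k) y
            have h2 : g (A.bullP (seq k) y) ≤ g y :=
              AltTree.wcancel hconv' h1 (gtop k hkK)
            have hrec : g (seq (k+1)) ≤ g (A.bullP (seq k) y) := by
              refine IHm (A.distP (seq k) y - 1) (by omega) _ ?_ ?_
              · exact distPle _ _ _ fun i => (hstepc i).1
              · exact distPle _ _ _ fun i => (hfar i).1
            exact le_trans hrec h2
      exact S (A.distP (seq k) y0) y0 le_rfl hy0
  intro k hk1 hkK z hz hlt
  have h2 : A.distP (seq k) z ≤ 1 := by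
    rcases hz with h | h
    · rw [distComm]
      exact lePdist _ _ h
    · exact lePdist _ _ h
  have hub : A.distP x z ≤ k + 1 := by
    have h3 := distTri x (seq k) z
    have h4 := hdistSeq k hkK
    omega
  have hlb : ¬ A.distP x z ≤ k := by
    intro hle
    exact absurd hlt (not_lt.mpr (hball k hkK z hle))
  omega
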